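/- Let k be a finite field of characteristic 2, let n ≥ 2, and let Δ ⊂ kⁿ be a nonempty proper subset. Then the setwise stabilizer Aut(A^n, Δ) = {φ ∈ Aut(A^n_k) : the induced bijection of kⁿ maps Δ onto Δ} is a maximal proper subgroup of Aut(A^n_k) if and only if 2·|Δ| ≠ |k|ⁿ. -/

import Mathlib

open MvPolynomial

open Equiv Equiv.Perm Subgroup

set_option linter.unusedSectionVars false
namespace StabAux

variable {V : Type*} [DecidableEq V]

/-- setwise stabilizer of a set of points, as a subgroup of `Perm V`. -/
def SP (A : Set V) : Subgroup (Perm V) where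
  carrier := {σ | σ '' A = A}
  one_mem' := by simp
  mul_mem' := by
    intro σ τ hσ hτ
    simp only [Set.mem_setOf_eq] at *
    rw [Perm.coe_mul, Set.image_comp, hτ, hσ]
  inv_mem' := by
    intro σ hσ
    simp only [Set.mem_setOf_eq] at *
    conv_lhs => rw [← hσ]
    rw [← Set.image_comp]
    simp

theorem mem_SP {A : Set V} {σ : Perm V} : σ ∈ SP A ↔ σ '' A = A := Iff.rfl

theorem image_compl (σ : Perm V) (A : Set V) : σ '' Aᶜ = (σ '' A)ᶜ := by
  apply Set.image_compl_eq σ.bijective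

theorem SP_compl (A : Set V) : SP Aᶜ = SP A := by
  ext σ
  simp only [mem_SP]
  constructor
  · intro h
    have := congrArg (·ᶜ) h
    simpa [image_compl] using this
  · intro h
    rw [image_compl, h]

theorem image_swap {A : Set V} {u z : V} (h : u ∈ A ↔ z ∈ A) : swap u z '' A = A := by
  ext w
  constructor
  · rintro ⟨b, hb, rfl⟩
    rcases eq_or_ne b u with rfl | hbu
    · rw [swap_apply_left]; exact h.mp hb
    rcases eq_or_ne b z with rfl | hbz
    · rw [swap_apply_right]; exact h.mpr hb
    · rwa [swap_apply_of_ne_of_ne hbu hbz]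
  · intro hw
    refine ⟨swap u z w, ?_, swap_apply_self u z w⟩
    rcases eq_or_ne w u with rfl | hwu
    · rw [swap_apply_left]; exact h.mp hw
    rcases eq_or_ne w z with rfl | hwz
    · rw [swap_apply_right]; exact h.mpr hw
    · rwa [swap_apply_of_ne_of_ne hwu hwz]

/-- the 3-cycle `x ↦ y ↦ z ↦ x`. -/
def c3 (x y z : V) : Perm V := swap x y * swap y z

theorem c3_fst {x y z : V} (hxy : x ≠ y) (hxz : x ≠ z) : c3 x y z x = y := by
  simp [c3, swap_apply_of_ne_of_ne hxy hxz]

theorem c3_snd {x y z : V} (hxz : x ≠ z) (hyz : y ≠ z) : c3 x y z y = z := by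
  simp [c3, swap_apply_of_ne_of_ne hxz.symm hyz.symm]

theorem c3_thd (x y z : V) : c3 x y z z = x := by
  simp [c3]

theorem c3_other {x y z w : V} (hx : w ≠ x) (hy : w ≠ y) (hz : w ≠ z) :
    c3 x y z w = w := by
  simp [c3, swap_apply_of_ne_of_ne hy hz, swap_apply_of_ne_of_ne hx hy]

theorem c3_conj (g : Perm V) (x y z : V) :
    g * c3 x y z * g⁻¹ = c3 (g x) (g y) (g z) := by
  simp only [c3, swap_apply_apply]
  group

theorem c3_mul_c3 {x y z : V} (hxy : x ≠ y) (hyz : y ≠ z) (hxz : x ≠ z) :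
    c3 x z y * c3 x y z = 1 := by
  ext w
  rcases eq_or_ne w x with rfl | hwx
  · rw [Perm.mul_apply, c3_fst hxy hxz, c3_thd]; rfl
  rcases eq_or_ne w y with rfl | hwy
  · rw [Perm.mul_apply, c3_snd hxz hyz, c3_snd hxy hyz.symm]; rfl
  rcases eq_or_ne w z with rfl | hwz
  · rw [Perm.mul_apply, c3_thd, c3_fst hxz hxy]; rfl
  · rw [Perm.mul_apply, c3_other hwx hwy hwz, c3_other hwx hwz hwy]; rfl

theorem c3_inv {x y z : V} (hxy : x ≠ y) (hyz : y ≠ z) (hxz : x ≠ z) :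
    (c3 x y z)⁻¹ = c3 x z y :=
  inv_eq_of_mul_eq_one_left (c3_mul_c3 hxy hyz hxz)

theorem c3_rot {x y z : V} (hxy : x ≠ y) (hyz : y ≠ z) (hxz : x ≠ z) :
    c3 x y z = c3 y z x := by
  ext w
  rcases eq_or_ne w x with rfl | hwx
  · rw [c3_fst hxy hxz, c3_thd]
  rcases eq_or_ne w y with rfl | hwy
  · rw [c3_snd hxz hyz, c3_fst hyz hxy.symm]
  rcases eq_or_ne w z with rfl | hwz
  · rw [c3_thd, c3_snd hxy.symm hxz.symm]
  · rw [c3_other hwx hwy hwz, c3_other hwy hwz hwx]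

theorem c3_image {A : Set V} {x y z : V} (hx : x ∈ A ↔ y ∈ A) (hy : y ∈ A ↔ z ∈ A) :
    c3 x y z '' A = A := by
  rw [c3, Perm.coe_mul, Set.image_comp, image_swap hy, image_swap hx]

theorem isThreeCycle_c3 {x y z : V} [Fintype V] (hxy : x ≠ y) (hyz : y ≠ z) (hxz : x ≠ z) :
    (c3 x y z).IsThreeCycle := by
  have := isThreeCycle_swap_mul_swap_same (a := y) (b := x) (c := z) hxy.symm hyz hxz
  rwa [swap_comm y x] at this

theorem c3_mem_alternating {x y z : V} [Fintype V] (hxy : x ≠ y) (hyz : y ≠ z) (hxz : x ≠ z) :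
    c3 x y z ∈ alternatingGroup V :=
  (isThreeCycle_c3 hxy hyz hxz).mem_alternatingGroup


/-- every abstract 3-cycle has the form `c3 x y z`. -/
theorem IsThreeCycle.eq_c3 [Fintype V] {σ : Perm V} (h : σ.IsThreeCycle) :
    ∃ x y z : V, x ≠ y ∧ y ≠ z ∧ x ≠ z ∧ σ = c3 x y z := by
  have hcard := h.card_support
  have hne : σ.support.Nonempty := by
    rw [← Finset.card_pos, hcard]; norm_num
  obtain ⟨x, hx⟩ := hne
  have h3 : σ ^ 3 = 1 := by
    have := h.orderOf
    rw [← this]; exact pow_orderOf_eq_one σ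
  have hσ3 : ∀ v, σ (σ (σ v)) = v := by
    intro v
    have : (σ ^ 3) v = v := by rw [h3]; rfl
    simpa [pow_succ, Perm.mul_apply] using this
  have hxy : x ≠ σ x := fun hh => (Perm.mem_support.mp hx) hh.symm
  have hy_supp : σ x ∈ σ.support := Perm.apply_mem_support.mpr hx
  have hyz : σ x ≠ σ (σ x) := fun hh => (Perm.mem_support.mp hy_supp) hh.symm
  have hxz : x ≠ σ (σ x) := by
    intro hh
    apply hxy
    have : σ x = σ (σ (σ x)) := congrArg σ hh
    rw [hσ3 x] at this
    exact this.symm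
  have hσz : σ (σ (σ x)) = x := hσ3 x
  have hz_supp : σ (σ x) ∈ σ.support := Perm.apply_mem_support.mpr hy_supp
  have hsub : ({x, σ x, σ (σ x)} : Finset V) ⊆ σ.support := by
    intro w hw
    simp only [Finset.mem_insert, Finset.mem_singleton] at hw
    rcases hw with rfl | rfl | rfl <;> assumption
  have hcard3 : ({x, σ x, σ (σ x)} : Finset V).card = 3 := by
    rw [Finset.card_insert_of_notMem (by simp [hxy, hxz]),
      Finset.card_insert_of_notMem (by simp [hyz]), Finset.card_singleton]
  have hs_eq : σ.support = {x, σ x, σ (σ x)} :=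
    (Finset.eq_of_subset_of_card_le hsub (by rw [hcard, hcard3])).symm
  refine ⟨x, σ x, σ (σ x), hxy, hyz, hxz, ?_⟩
  ext w
  rcases eq_or_ne w x with rfl | hwx
  · rw [c3_fst hxy hxz]
  rcases eq_or_ne w (σ x) with rfl | hwy
  · rw [c3_snd hxz hyz]
  rcases eq_or_ne w (σ (σ x)) with rfl | hwz
  · rw [c3_thd, hσz]
  · rw [c3_other hwx hwy hwz]
    have : w ∉ σ.support := by
      rw [hs_eq]
      simp [hwx, hwy, hwz]
    exact Perm.notMem_support.mp this

/-- a subgroup containing all `c3`'s contains the alternating group. -/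
theorem alt_le_of_c3 [Fintype V] {W : Subgroup (Perm V)}
    (h : ∀ x y z : V, x ≠ y → y ≠ z → x ≠ z → c3 x y z ∈ W) :
    alternatingGroup V ≤ W := by
  rw [← closure_three_cycles_eq_alternating]
  rw [Subgroup.closure_le]
  intro σ hσ
  obtain ⟨x, y, z, hxy, hyz, hxz, rfl⟩ := IsThreeCycle.eq_c3 hσ
  exact h x y z hxy hyz hxz

/-- 2-transitivity plus one 3-cycle gives all 3-cycles. -/
theorem all_c3 {W : Subgroup (Perm V)}
    (h2 : ∀ x y x' y' : V, x ≠ y → x' ≠ y' → ∃ g ∈ W, g x = x' ∧ g y = y')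
    {x₀ y₀ z₀ : V} (h01 : x₀ ≠ y₀) (h02 : y₀ ≠ z₀) (h03 : x₀ ≠ z₀)
    (hκ : c3 x₀ y₀ z₀ ∈ W) :
    ∀ x y z : V, x ≠ y → y ≠ z → x ≠ z → c3 x y z ∈ W := by
  -- first: for every pair there is a 3-cycle through it
  have pair3 : ∀ x y : V, x ≠ y → ∃ w, w ≠ x ∧ w ≠ y ∧ c3 x y w ∈ W := by
    intro x y hxy
    obtain ⟨g, hg, hgx, hgy⟩ := h2 x₀ y₀ x y h01 hxy
    refine ⟨g z₀, ?_, ?_, ?_⟩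
    · rw [← hgx]; exact fun hh => h03 (g.injective hh).symm
    · rw [← hgy]; exact fun hh => h02 (g.injective hh).symm
    · have := c3_conj g x₀ y₀ z₀
      rw [hgx, hgy] at this
      rw [← this]
      exact mul_mem (mul_mem hg hκ) (inv_mem hg)
  intro x y z hxy hyz hxz
  obtain ⟨w, hwx, hwy, hw⟩ := pair3 x y hxy
  -- α := c3 x y w ∈ W  (that's hw)
  rcases eq_or_ne w z with rfl | hwz
  · exact hw
  have finish : c3 x w z ∈ W → c3 x y z ∈ W := by
    intro hγ
    have hconj := c3_conj (c3 x y w) x w z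
    rw [c3_fst hxy hwx.symm, c3_thd, c3_other hxz.symm hyz.symm hwz.symm] at hconj
    have hδ : c3 y x z ∈ W := by
      rw [← hconj]; exact mul_mem (mul_mem hw hγ) (inv_mem hw)
    have : (c3 y x z)⁻¹ ∈ W := inv_mem hδ
    rwa [c3_inv hxy.symm hxz hyz, ← c3_rot hxy hyz hxz] at this
  obtain ⟨t, htw, htz, ht⟩ := pair3 w z hwz
  rcases eq_or_ne t x with htx | htx
  · -- β = c3 w z x ∈ W
    rw [htx] at ht
    have h1 := c3_conj (c3 w z x) x y w
    rw [c3_thd, c3_other hwy.symm hyz hxy.symm, c3_fst hwz hwx] at h1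
    have hγ' : c3 w y z ∈ W := by
      rw [← h1]; exact mul_mem (mul_mem ht hw) (inv_mem ht)
    have h2 := c3_conj (c3 x y w) w y z
    rw [c3_thd, c3_snd hwx.symm hwy.symm, c3_other hxz.symm hyz.symm hwz.symm] at h2
    apply finish
    rw [← h2]; exact mul_mem (mul_mem hw hγ') (inv_mem hw)
  rcases eq_or_ne t y with hty | hty
  · rw [hty] at ht
    have h1 := c3_conj (c3 w z y) x y w
    rw [c3_other hwx.symm hxz hxy, c3_thd, c3_fst hwz hwy] at h1
    apply finish
    rw [← h1]; exact mul_mem (mul_mem ht hw) (inv_mem ht)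
  · have h1 := c3_conj (c3 w z t) x y w
    rw [c3_other hwx.symm hxz htx.symm, c3_other hwy.symm hyz hty.symm,
      c3_fst hwz htw.symm] at h1
    rw [← h1]; exact mul_mem (mul_mem ht hw) (inv_mem ht)



section Fin
variable [Fintype V]

theorem swap_eq_conj {x y z : V} (hxy : x ≠ y) (hxz : x ≠ z) (hyz : y ≠ z) :
    swap x y = swap y z * swap x z * (swap y z)⁻¹ := by
  have h := swap_apply_apply (swap y z) x z
  rwa [swap_apply_of_ne_of_ne hxy hxz, swap_apply_right] at h

/-- maximality of a setwise stabilizer in the symmetric group, `|A| < |Aᶜ|`. -/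
theorem L1 {A : Set V} (hA : A.Nonempty) (hlt : A.ncard < Aᶜ.ncard) :
    IsCoatom (SP A) := by
  obtain ⟨u₀, hu₀⟩ := hA
  have hCA : Aᶜ.Nonempty := by
    rw [← Set.ncard_pos (Set.toFinite _)]
    omega
  obtain ⟨z₀, hz₀⟩ := hCA
  constructor
  · -- SP A ≠ ⊤
    intro htop
    have hmem : swap u₀ z₀ ∈ SP A := by rw [htop]; trivial
    rw [mem_SP] at hmem
    have : z₀ ∈ A := by
      rw [← hmem]
      exact ⟨u₀, hu₀, swap_apply_left _ _⟩
    exact hz₀ this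
  · intro K hK
    obtain ⟨g, hgK, hgSP⟩ := SetLike.exists_of_lt hK
    set B := g '' A with hB
    have hBA : B ≠ A := fun h => hgSP (mem_SP.mpr h)
    have hBcard : B.ncard = A.ncard := Set.ncard_image_of_injective A g.injective
    have hAdB : (A \ B).Nonempty := by
      rw [Set.diff_nonempty]
      intro hsub
      exact hBA (Set.eq_of_subset_of_ncard_le hsub (by omega) (Set.toFinite _)).symm
    have hCdB : (Aᶜ \ B).Nonempty := by
      rw [Set.diff_nonempty]
      intro hsub
      have := Set.ncard_le_ncard hsub (Set.toFinite _)
      omega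
    obtain ⟨u, huA, huB⟩ := hAdB
    obtain ⟨z, hzC, hzB⟩ := hCdB
    have huz : u ≠ z := fun h => hzC (h ▸ huA)
    have key : ∀ σ : Perm V, σ '' B = B → σ ∈ K := by
      intro σ hσ
      have hback : ⇑g⁻¹ '' B = A := by
        rw [hB, ← Set.image_comp]
        have hid : (⇑g⁻¹ ∘ ⇑g) = id := by funext a; simp
        rw [hid, Set.image_id]
      have h1 : (g⁻¹ * σ * g) ∈ SP A := by
        rw [mem_SP, Perm.coe_mul, Perm.coe_mul, Set.image_comp, Set.image_comp, ← hB, hσ,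
          hback]
      have h2 : σ = g * (g⁻¹ * σ * g) * g⁻¹ := by group
      rw [h2]
      exact mul_mem (mul_mem hgK (hK.le h1)) (inv_mem hgK)
    have hswap : swap u z ∈ K :=
      key _ (image_swap (iff_of_false huB hzB))
    have crossing : ∀ u' ∈ A, ∀ z' ∈ Aᶜ, swap u' z' ∈ K := by
      intro u' hu' z' hz'
      have h1 : swap u u' ∈ SP A := mem_SP.mpr (image_swap (iff_of_true huA hu'))
      have h2 : swap z z' ∈ SP A := mem_SP.mpr (image_swap (iff_of_false hzC hz'))
      have hh : (swap u u' * swap z z') ∈ K := hK.le (mul_mem h1 h2)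
      have huzs : u ≠ z' := fun h => hz' (h ▸ huA)
      have hu'z : u' ≠ z := fun h => hzC (h ▸ hu')
      have hu'z' : u' ≠ z' := fun h => hz' (h ▸ hu')
      have e1 : (swap u u' * swap z z') u = u' := by
        rw [Perm.mul_apply, swap_apply_of_ne_of_ne huz huzs, swap_apply_left]
      have e2 : (swap u u' * swap z z') z = z' := by
        rw [Perm.mul_apply, swap_apply_left, swap_apply_of_ne_of_ne huzs.symm hu'z'.symm]
      have := swap_apply_apply (swap u u' * swap z z') u z
      rw [e1, e2] at this
      rw [this]
      exact mul_mem (mul_mem hh hswap) (inv_mem hh)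
    have allswap : ∀ x y : V, x ≠ y → swap x y ∈ K := by
      intro x y hxy
      by_cases hx : x ∈ A <;> by_cases hy : y ∈ A
      · -- both in A, pivot z
        have hxz : x ≠ z := fun h => hzC (h ▸ hx)
        have hyz : y ≠ z := fun h => hzC (h ▸ hy)
        rw [swap_eq_conj hxy hxz hyz]
        exact mul_mem (mul_mem (crossing y hy z hzC) (crossing x hx z hzC))
          (inv_mem (crossing y hy z hzC))
      · exact crossing x hx y hy
      · rw [swap_comm]; exact crossing y hy x hx
      · -- both outside A, pivot u₀
        have hxu : x ≠ u₀ := fun h => hx (h ▸ hu₀)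
        have hyu : y ≠ u₀ := fun h => hy (h ▸ hu₀)
        rw [swap_eq_conj hxy hxu hyu]
        have c1 : swap y u₀ ∈ K := by rw [swap_comm]; exact crossing u₀ hu₀ y hy
        have c2 : swap x u₀ ∈ K := by rw [swap_comm]; exact crossing u₀ hu₀ x hx
        exact mul_mem (mul_mem c1 c2) (inv_mem c1)
    rw [eq_top_iff, ← Equiv.Perm.closure_isSwap]
    rw [Subgroup.closure_le]
    rintro σ ⟨x, y, hxy, rfl⟩
    exact allswap x y hxy


/-- relative maximality of a subgroup inside a subgroup. -/
def MaxRel {X : Type*} [Group X] (G H : Subgroup X) : Prop :=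
  H < G ∧ ∀ K, H < K → K ≤ G → K = G

theorem pick2 {s : Set V} (h : 2 ≤ s.ncard) : ∃ a ∈ s, ∃ b ∈ s, a ≠ b :=
  (Set.one_lt_ncard (Set.toFinite s)).mp (by omega)

theorem sign_c3 {x y z : V} (hxy : x ≠ y) (hyz : y ≠ z) :
    Equiv.Perm.sign (c3 x y z) = 1 := by
  rw [c3, map_mul, sign_swap hxy, sign_swap hyz]
  decide

/-- maximality of a setwise stabilizer relative to an overgroup of the alternating
group, `0 < |A| < |Aᶜ|`, `12 ≤ |V|`. -/
theorem L2 {G : Subgroup (Perm V)} (hG : alternatingGroup V ≤ G)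
    (hV : 12 ≤ Fintype.card V) {A : Set V} (hA : A.Nonempty)
    (hlt : A.ncard < Aᶜ.ncard) : MaxRel G (SP A ⊓ G) := by
  obtain ⟨u₀, hu₀⟩ := hA
  have hsum : A.ncard + Aᶜ.ncard = Fintype.card V := by
    rw [Set.ncard_add_ncard_compl, Nat.card_eq_fintype_card]
  have hb7 : 7 ≤ Aᶜ.ncard := by omega
  have memC : ∀ x, x ∈ Aᶜ → x ∉ A := fun x hx => hx
  have neAC : ∀ x y : V, x ∈ A → y ∈ Aᶜ → x ≠ y := fun x y hx hy h => hy (h ▸ hx)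
  obtain ⟨w₁₀, hw₁₀, w₂₀, hw₂₀, hw₀⟩ := pick2 (s := Aᶜ) (by omega)
  constructor
  · refine lt_of_le_of_ne inf_le_right ?_
    intro heq
    have h1 : c3 u₀ w₁₀ w₂₀ ∈ SP A ⊓ G := by
      rw [heq]
      exact hG (mem_alternatingGroup.mpr (sign_c3 (neAC _ _ hu₀ hw₁₀) hw₀))
    have h2 : w₁₀ ∈ A := by
      have him := (mem_SP.mp h1.1)
      rw [← him]
      refine ⟨u₀, hu₀, ?_⟩
      exact c3_fst (neAC _ _ hu₀ hw₁₀) (neAC _ _ hu₀ hw₂₀)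
    exact hw₁₀ h2
  intro K hKlt hKle
  have hH : SP A ⊓ G ≤ K := hKlt.le
  -- transfer: even permutations stabilizing the image of A under an element of K are in K
  have key : ∀ p, p ∈ K → ∀ σ : Perm V, σ ∈ alternatingGroup V →
      σ '' (⇑p '' A) = ⇑p '' A → σ ∈ K := by
    intro p hp σ hσalt hσ
    have hback : ⇑p⁻¹ '' (⇑p '' A) = A := by
      rw [← Set.image_comp]
      have hid : (⇑p⁻¹ ∘ ⇑p) = id := by funext a; simp
      rw [hid, Set.image_id]
    have hτSP : (p⁻¹ * σ * p) ∈ SP A := by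
      rw [mem_SP, Perm.coe_mul, Perm.coe_mul, Set.image_comp, Set.image_comp, hσ, hback]
    have hτalt : (p⁻¹ * σ * p) ∈ alternatingGroup V := by
      have := (alternatingGroup.normal (α := V)).conj_mem σ hσalt p⁻¹
      simpa [mul_assoc] using this
    have hτK : (p⁻¹ * σ * p) ∈ K := hH ⟨hτSP, hG hτalt⟩
    have : σ = p * (p⁻¹ * σ * p) * p⁻¹ := by group
    rw [this]
    exact mul_mem (mul_mem hp hτK) (inv_mem hp)
  -- main engine: a crossing 3-cycle in K forces K = G
  have C1 : ∀ u z₁ z₂ : V, u ∈ A → z₁ ∈ Aᶜ → z₂ ∈ Aᶜ → z₁ ≠ z₂ →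
      c3 u z₁ z₂ ∈ K → K = G := by
    intro u z₁ z₂ huA hz₁ hz₂ h12 hκ
    -- conjugation step
    have step : ∀ u' z₁' z₂' : V, u' ∈ A → z₁' ∈ Aᶜ → z₂' ∈ Aᶜ → z₁' ≠ z₂' →
        ∀ h : Perm V, h ∈ SP A → Equiv.Perm.sign h = 1 →
        h u = u' → h z₁ = z₁' → h z₂ = z₂' → c3 u' z₁' z₂' ∈ K := by
      intro u' z₁' z₂' _ _ _ _ h hSP hsgn e1 e2 e3
      have hhK : h ∈ K := hH ⟨hSP, hG (mem_alternatingGroup.mpr hsgn)⟩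
      have hc := c3_conj h u z₁ z₂
      rw [e1, e2, e3] at hc
      rw [← hc]
      exact mul_mem (mul_mem hhK hκ) (inv_mem hhK)
    have conjH : ∀ u' z₁' z₂' : V, u' ∈ A → z₁' ∈ Aᶜ → z₂' ∈ Aᶜ → z₁' ≠ z₂' →
        c3 u' z₁' z₂' ∈ K := by
      intro u' z₁' z₂' hu' hz₁' hz₂' h12'
      have hS4 : ({z₁, z₂, z₁', z₂'} : Set V).ncard ≤ 4 := by
        have h1 := Set.ncard_insert_le z₁ ({z₂, z₁', z₂'} : Set V)
        have h2 := Set.ncard_insert_le z₂ ({z₁', z₂'} : Set V)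
        have h3 := Set.ncard_insert_le z₁' ({z₂'} : Set V)
        have h4 : ({z₂'} : Set V).ncard = 1 := Set.ncard_singleton _
        omega
      have hspare : 2 ≤ (Aᶜ \ ({z₁, z₂, z₁', z₂'} : Set V)).ncard := by
        have := Set.ncard_le_ncard_diff_add_ncard Aᶜ ({z₁, z₂, z₁', z₂'} : Set V)
          (Set.toFinite _)
        omega
      obtain ⟨w₁, hw₁, w₂, hw₂, hww⟩ := pick2 hspare
      obtain ⟨hw₁C, hw₁S⟩ := hw₁
      obtain ⟨hw₂C, hw₂S⟩ := hw₂
      simp only [Set.mem_insert_iff, Set.mem_singleton_iff, not_or] at hw₁S hw₂S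
      -- the permutation h₀
      set τ₁ := swap z₁ z₁' with hτ₁
      set z₂m := τ₁ z₂ with hz₂m
      have hz₂m_cases : z₂m = z₂ ∨ z₂m = z₁' ∨ z₂m = z₁ := by
        rcases eq_or_ne z₂ z₁ with h | h
        · exact Or.inr (Or.inl (by rw [hz₂m, h, hτ₁, swap_apply_left]))
        rcases eq_or_ne z₂ z₁' with h' | h'
        · exact Or.inr (Or.inr (by rw [hz₂m, h', hτ₁, swap_apply_right]))
        · exact Or.inl (by rw [hz₂m, hτ₁, swap_apply_of_ne_of_ne h h'])
      have hz₂mC : z₂m ∈ Aᶜ := by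
        rcases hz₂m_cases with h | h | h <;> rw [h] <;> assumption
      have hz₂mne : z₂m ≠ z₁' := by
        intro hh
        apply h12
        apply τ₁.injective
        rw [← hz₂m, hh, hτ₁, swap_apply_left]
      set τ₂ := swap z₂m z₂' with hτ₂
      set sw := swap u u' with hsw
      set h₀ := sw * (τ₂ * τ₁) with hh₀
      have hSP₀ : h₀ ∈ SP A := by
        refine mul_mem (mem_SP.mpr (image_swap (iff_of_true huA hu'))) (mul_mem ?_ ?_)
        · exact mem_SP.mpr (image_swap (iff_of_false (memC _ hz₂mC) (memC _ hz₂')))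
        · exact mem_SP.mpr (image_swap (iff_of_false (memC _ hz₁) (memC _ hz₁')))
      have e1 : h₀ u = u' := by
        rw [hh₀, Perm.mul_apply, Perm.mul_apply, hτ₁,
          swap_apply_of_ne_of_ne (neAC _ _ huA hz₁) (neAC _ _ huA hz₁'), hτ₂,
          swap_apply_of_ne_of_ne (neAC _ _ huA hz₂mC) (neAC _ _ huA hz₂'), hsw,
          swap_apply_left]
      have e2 : h₀ z₁ = z₁' := by
        rw [hh₀, Perm.mul_apply, Perm.mul_apply, hτ₁, swap_apply_left, hτ₂,
          swap_apply_of_ne_of_ne (Ne.symm hz₂mne) h12', hsw,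
          swap_apply_of_ne_of_ne (neAC _ _ huA hz₁').symm (neAC _ _ hu' hz₁').symm]
      have e3 : h₀ z₂ = z₂' := by
        rw [hh₀, Perm.mul_apply, Perm.mul_apply, hτ₁, ← hz₂m, hτ₂, swap_apply_left, hsw,
          swap_apply_of_ne_of_ne (neAC _ _ huA hz₂').symm (neAC _ _ hu' hz₂').symm]
      rcases Int.units_eq_one_or (Equiv.Perm.sign h₀) with hsgn | hsgn
      · exact step u' z₁' z₂' hu' hz₁' hz₂' h12' h₀ hSP₀ hsgn e1 e2 e3
      · -- fix parity with a spare swap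
        have hSP' : h₀ * swap w₁ w₂ ∈ SP A :=
          mul_mem hSP₀ (mem_SP.mpr (image_swap (iff_of_false (memC _ hw₁C) (memC _ hw₂C))))
        have hsgn' : Equiv.Perm.sign (h₀ * swap w₁ w₂) = 1 := by
          rw [map_mul, hsgn, sign_swap hww]; decide
        have f1 : (h₀ * swap w₁ w₂) u = u' := by
          rw [Perm.mul_apply,
            swap_apply_of_ne_of_ne (neAC _ _ huA hw₁C) (neAC _ _ huA hw₂C), e1]
        have f2 : (h₀ * swap w₁ w₂) z₁ = z₁' := by
          rw [Perm.mul_apply,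
            swap_apply_of_ne_of_ne (fun h => hw₁S.1 h.symm) (fun h => hw₂S.1 h.symm), e2]
        have f3 : (h₀ * swap w₁ w₂) z₂ = z₂' := by
          rw [Perm.mul_apply,
            swap_apply_of_ne_of_ne (fun h => hw₁S.2.1 h.symm) (fun h => hw₂S.2.1 h.symm), e3]
        exact step u' z₁' z₂' hu' hz₁' hz₂' h12' _ hSP' hsgn' f1 f2 f3
    -- all 3-cycles are in K
    have sub21 : ∀ x y z : V, x ∈ A → y ∈ A → z ∈ Aᶜ → x ≠ y → c3 x y z ∈ K := by
      intro x y z hx hy hz hxy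
      have hzC' : z ∈ Aᶜ := hz
      obtain ⟨w, hwmem⟩ : (Aᶜ \ {z} : Set V).Nonempty := by
        rw [← Set.ncard_pos (Set.toFinite _), Set.ncard_diff_singleton_of_mem hz]
        omega
      obtain ⟨hwC, hwz⟩ := hwmem
      have hwz' : w ≠ z := by simpa using hwz
      have hγ : c3 y w z ∈ K := conjH y w z hy hwC hz hwz'
      have hα : c3 x w z ∈ K := conjH x w z hx hwC hz hwz'
      have hc := c3_conj (c3 y w z) x w z
      rw [c3_other (fun h => hxy h) (neAC _ _ hx hwC) (neAC _ _ hx hz),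
        c3_snd (neAC _ _ hy hz).symm.symm hwz', c3_thd] at hc
      have hmem : c3 x z y ∈ K := by
        rw [← hc]; exact mul_mem (mul_mem hγ hα) (inv_mem hγ)
      have := inv_mem hmem
      rwa [c3_inv (neAC _ _ hx hz) (neAC _ _ hy hz).symm hxy] at this
    have all3 : ∀ x y z : V, x ≠ y → y ≠ z → x ≠ z → c3 x y z ∈ K := by
      intro x y z hxy hyz hxz
      by_cases hx : x ∈ A <;> by_cases hy : y ∈ A <;> by_cases hz : z ∈ A
      · -- (A,A,A)
        have hz' : (z : V) ∈ A := hz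
        obtain ⟨z', hz'C, w'', hw''C, hzw'⟩ := pick2 (s := Aᶜ) (by omega)
        have hγ₂ : c3 x y z' ∈ K := sub21 x y z' hx hy hz'C hxy
        have hδ : c3 z w'' z' ∈ K := conjH z w'' z' hz hw''C hz'C (Ne.symm hzw')
        have hc := c3_conj (c3 z w'' z') x y z'
        rw [c3_other hxz (neAC _ _ hx hw''C) (neAC _ _ hx hz'C),
          c3_other hyz (neAC _ _ hy hw''C) (neAC _ _ hy hz'C), c3_thd] at hc
        rw [← hc]
        exact mul_mem (mul_mem hδ hγ₂) (inv_mem hδ)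
      · exact sub21 x y z hx hy hz hxy
      · -- (A,C,A) : rotate twice
        rw [c3_rot hxy hyz hxz, c3_rot hyz hxz.symm hxy.symm]
        exact sub21 z x y hz hx hy hxz.symm
      · exact conjH x y z hx hy hz hyz
      · -- (C,A,A)
        rw [c3_rot hxy hyz hxz]
        exact sub21 y z x hy hz hx hyz
      · -- (C,A,C)
        rw [c3_rot hxy hyz hxz]
        exact conjH y z x hy hz hx (Ne.symm hxz)
      · -- (C,C,A)
        rw [c3_rot hxy hyz hxz, c3_rot hyz hxz.symm hxy.symm]
        exact conjH z x y hz hx hy hxy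
      · -- (C,C,C)
        refine hH ⟨mem_SP.mpr (c3_image (iff_of_false hx hy) (iff_of_false hy hz)), hG ?_⟩
        exact mem_alternatingGroup.mpr (sign_c3 hxy hyz)
    have hKalt : alternatingGroup V ≤ K := alt_le_of_c3 all3
    refine le_antisymm hKle ?_
    intro σ hσG
    rcases Int.units_eq_one_or (Equiv.Perm.sign σ) with hsgn | hsgn
    · exact hKalt (mem_alternatingGroup.mpr hsgn)
    · have htalt : σ * swap z₁ z₂ ∈ alternatingGroup V := by
        rw [mem_alternatingGroup, map_mul, hsgn, sign_swap h12]; decide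
      have htG : swap z₁ z₂ ∈ G := by
        have : swap z₁ z₂ = σ⁻¹ * (σ * swap z₁ z₂) := by group
        rw [this]
        exact mul_mem (inv_mem hσG) (hG htalt)
      have htK : swap z₁ z₂ ∈ K :=
        hH ⟨mem_SP.mpr (image_swap (iff_of_false (memC _ hz₁) (memC _ hz₂))), htG⟩
      have : σ = (σ * swap z₁ z₂) * (swap z₁ z₂)⁻¹ := by group
      rw [this]
      exact mul_mem (hKalt htalt) (inv_mem htK)
  -- produce the initial crossing 3-cycle
  obtain ⟨g, hgK, hgH⟩ := SetLike.exists_of_lt hKlt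
  have hgG : g ∈ G := hKle hgK
  have hgSP : g ∉ SP A := fun h => hgH ⟨h, hgG⟩
  set B := ⇑g '' A with hB
  have hBA : B ≠ A := fun h => hgSP (mem_SP.mpr h)
  have hBcard : B.ncard = A.ncard := Set.ncard_image_of_injective A g.injective
  have hAdB : (A \ B).Nonempty := by
    rw [Set.diff_nonempty]
    intro hsub
    exact hBA (Set.eq_of_subset_of_ncard_le hsub (by omega) (Set.toFinite _)).symm
  obtain ⟨u, huA, huB⟩ := hAdB
  by_cases hc : 2 ≤ (Aᶜ \ B).ncard
  · obtain ⟨z₁, hz₁, z₂, hz₂, h12⟩ := pick2 hc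
    have hκ : c3 u z₁ z₂ ∈ K := by
      refine key g hgK _ (mem_alternatingGroup.mpr (sign_c3 (neAC _ _ huA hz₁.1) h12)) ?_
      rw [← hB]
      exact c3_image (iff_of_false huB hz₁.2) (iff_of_false hz₁.2 hz₂.2)
    exact C1 u z₁ z₂ huA hz₁.1 hz₂.1 h12 hκ
  · -- degenerate case : |Aᶜ \ B| ≤ 1
    push_neg at hc
    have heq1 : (Aᶜ ∩ B).ncard + (Aᶜ \ B).ncard = Aᶜ.ncard :=
      Set.ncard_inter_add_ncard_diff_eq_ncard Aᶜ B (Set.toFinite _)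
    have heq2 : (B ∩ A).ncard + (B \ A).ncard = B.ncard :=
      Set.ncard_inter_add_ncard_diff_eq_ncard B A (Set.toFinite _)
    have hBdA : (B \ A) = Aᶜ ∩ B := by
      ext w; constructor
      · rintro ⟨h1, h2⟩; exact ⟨h2, h1⟩
      · rintro ⟨h1, h2⟩; exact ⟨h2, h1⟩
    rw [← hBdA] at heq1
    -- from omega : (B ∩ A).ncard = 0, (Aᶜ \ B).ncard = 1
    have hBA0 : (B ∩ A).ncard = 0 := by omega
    have hd1 : (Aᶜ \ B).ncard = 1 := by omega
    have hBAempty : B ∩ A = ∅ := (Set.ncard_eq_zero (Set.toFinite _)).mp hBA0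
    have ha6 : 6 ≤ A.ncard := by omega
    obtain ⟨b₁, hb₁, b₂, hb₂, hb12⟩ := pick2 (s := B) (by omega)
    obtain ⟨z, hzmem⟩ : (Aᶜ \ B).Nonempty := by
      rw [← Set.ncard_pos (Set.toFinite _)]; omega
    obtain ⟨hzC, hzB⟩ := hzmem
    have hb₁A : b₁ ∉ A := fun h => (Set.eq_empty_iff_forall_notMem.mp hBAempty b₁) ⟨hb₁, h⟩
    have hb₂A : b₂ ∉ A := fun h => (Set.eq_empty_iff_forall_notMem.mp hBAempty b₂) ⟨hb₂, h⟩
    have huB' : u ∉ B := huB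
    have huz : u ≠ z := neAC _ _ huA hzC
    set π₀ := swap u z * swap b₁ b₂ with hπ₀
    have hπ₀alt : π₀ ∈ alternatingGroup V := by
      rw [mem_alternatingGroup, hπ₀, map_mul, sign_swap huz, sign_swap hb12]; decide
    have hπ₀B : ⇑π₀ '' B = B := by
      rw [hπ₀, Perm.coe_mul, Set.image_comp, image_swap (iff_of_true hb₁ hb₂),
        image_swap (iff_of_false huB' hzB)]
    have hπ₀K : π₀ ∈ K := key g hgK π₀ hπ₀alt hπ₀B
    -- B' = π₀ '' A = (A \ {u}) ∪ {z}
    have hπ₀u : π₀ u = z := by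
      have hub₁ : u ≠ b₁ := fun h => huB' (h ▸ hb₁)
      have hub₂ : u ≠ b₂ := fun h => huB' (h ▸ hb₂)
      rw [hπ₀, Perm.mul_apply, swap_apply_of_ne_of_ne hub₁ hub₂, swap_apply_left]
    have hπ₀w : ∀ w ∈ A, w ≠ u → π₀ w = w := by
      intro w hw hwu
      have h1 : w ≠ b₁ := fun h => hb₁A (h ▸ hw)
      have h2 : w ≠ b₂ := fun h => hb₂A (h ▸ hw)
      have h3 : w ≠ z := neAC _ _ hw hzC
      rw [hπ₀, Perm.mul_apply, swap_apply_of_ne_of_ne h1 h2,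
        swap_apply_of_ne_of_ne hwu h3]
    have hB' : ⇑π₀ '' A = (A \ {u}) ∪ {z} := by
      ext w
      constructor
      · rintro ⟨v, hv, rfl⟩
        rcases eq_or_ne v u with rfl | hvu
        · rw [hπ₀u]; exact Or.inr rfl
        · rw [hπ₀w v hv hvu]; exact Or.inl ⟨hv, hvu⟩
      · rintro (⟨hw, hwu⟩ | rfl)
        · exact ⟨w, hw, hπ₀w w hw hwu⟩
        · exact ⟨u, huA, hπ₀u⟩
    -- pick z₁ ≠ z₂ in Aᶜ \ {z} ⊆ Aᶜ \ B'
    have hz₁₂ : 2 ≤ (Aᶜ \ {z} : Set V).ncard := by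
      rw [Set.ncard_diff_singleton_of_mem hzC]
      omega
    obtain ⟨z₁, hz₁m, z₂, hz₂m, h12⟩ := pick2 hz₁₂
    obtain ⟨hz₁C, hz₁z⟩ := hz₁m
    obtain ⟨hz₂C, hz₂z⟩ := hz₂m
    have hnotB' : ∀ w, w ∈ Aᶜ → w ≠ z → w ∉ ((A \ {u}) ∪ {z} : Set V) := by
      rintro w hwC hwz (⟨hw1, _⟩ | hw2)
      · exact hwC hw1
      · exact hwz hw2
    have huB'2 : u ∉ ((A \ {u}) ∪ {z} : Set V) := by
      rintro (⟨_, h⟩ | h)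
      · exact h rfl
      · exact huz h
    have hκ : c3 u z₁ z₂ ∈ K := by
      refine key π₀ hπ₀K _ (mem_alternatingGroup.mpr (sign_c3 (neAC _ _ huA hz₁C) h12)) ?_
      rw [hB']
      exact c3_image (iff_of_false huB'2 (hnotB' z₁ hz₁C hz₁z))
        (iff_of_false (hnotB' z₁ hz₁C hz₁z) (hnotB' z₂ hz₂C hz₂z))
    exact C1 u z₁ z₂ huA hz₁C hz₂C h12 hκ


theorem image_inv_eq {σ : Perm V} {S T : Set V} (h : ⇑σ '' S = T) : ⇑σ⁻¹ '' T = S := by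
  rw [← h, ← Set.image_comp]
  have hid : (⇑σ⁻¹ ∘ ⇑σ) = id := by funext a; simp
  rw [hid, Set.image_id]

/-- when `|A| = |Aᶜ|`, the stabilizer is not relatively maximal. -/
theorem L3 {G : Subgroup (Perm V)} (hG : alternatingGroup V ≤ G)
    (hV : 4 ≤ Fintype.card V) {A : Set V} (hA : A.Nonempty)
    (heq : A.ncard = Aᶜ.ncard) : ¬ MaxRel G (SP A ⊓ G) := by
  classical
  have hsum : A.ncard + Aᶜ.ncard = Fintype.card V := by
    rw [Set.ncard_add_ncard_compl, Nat.card_eq_fintype_card]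
  have ha2 : 2 ≤ A.ncard := by omega
  have hb2 : 2 ≤ Aᶜ.ncard := by omega
  obtain ⟨a₁, ha₁, a₂, ha₂, ha12⟩ := pick2 ha2
  obtain ⟨z₀, hz₀, z₁, hz₁, hz01⟩ := pick2 hb2
  have neAC : ∀ x y : V, x ∈ A → y ∈ Aᶜ → x ≠ y := fun x y hx hy h => hy (h ▸ hx)
  -- the subgroup stabilizing the partition {A, Aᶜ}
  set M : Subgroup (Perm V) :=
    { carrier := {σ | (⇑σ '' A = A ∨ ⇑σ '' A = Aᶜ) ∧ σ ∈ G}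
      one_mem' := ⟨Or.inl (by simp), one_mem G⟩
      mul_mem' := by
        rintro σ τ ⟨hσ, hσG⟩ ⟨hτ, hτG⟩
        refine ⟨?_, mul_mem hσG hτG⟩
        rw [Perm.coe_mul, Set.image_comp]
        rcases hτ with hτ | hτ <;> rw [hτ] <;> rcases hσ with hσ | hσ
        · exact Or.inl hσ
        · exact Or.inr hσ
        · rw [image_compl, hσ]; exact Or.inr rfl
        · rw [image_compl, hσ, compl_compl]; exact Or.inl rfl
      inv_mem' := by
        rintro σ ⟨hσ, hσG⟩
        refine ⟨?_, inv_mem hσG⟩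
        rcases hσ with hσ | hσ
        · exact Or.inl (image_inv_eq hσ)
        · right
          have h2 : ⇑σ '' Aᶜ = A := by rw [image_compl, hσ, compl_compl]
          exact image_inv_eq h2 } with hM
  -- an even permutation exchanging A and Aᶜ
  have hcards : Fintype.card ↥A = Fintype.card ↥Aᶜ := by
    rw [← Nat.card_eq_fintype_card, ← Nat.card_eq_fintype_card,
      Nat.card_coe_set_eq, Nat.card_coe_set_eq, heq]
  have e : ↥A ≃ ↥Aᶜ := Fintype.equivOfCardEq hcards
  set σ₀ : Perm V := (Equiv.Set.sumCompl A).symm.trans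
    ((Equiv.sumCongr e e.symm).trans ((Equiv.sumComm _ _).trans (Equiv.Set.sumCompl A)))
    with hσ₀def
  have hσ₀a : ∀ a (ha : a ∈ A), σ₀ a = ↑(e ⟨a, ha⟩) := by
    intro a ha
    rw [hσ₀def]
    simp [Equiv.Set.sumCompl_symm_apply_of_mem ha]
  have hσ₀c : ∀ c (hc : c ∈ Aᶜ), σ₀ c = ↑(e.symm ⟨c, hc⟩) := by
    intro c hc
    rw [hσ₀def]
    simp [Equiv.Set.sumCompl_symm_apply_of_notMem (Set.notMem_of_mem_compl hc)]
  have hσ₀img : ⇑σ₀ '' A = Aᶜ := by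
    ext w
    constructor
    · rintro ⟨a, ha, rfl⟩
      rw [hσ₀a a ha]
      exact (e ⟨a, ha⟩).2
    · intro hw
      refine ⟨↑(e.symm ⟨w, hw⟩), (e.symm ⟨w, hw⟩).2, ?_⟩
      rw [hσ₀a _ (e.symm ⟨w, hw⟩).2]
      simp
  -- make it even
  obtain ⟨τ, hτsgn, hτimg⟩ : ∃ τ : Perm V, Equiv.Perm.sign τ = 1 ∧ ⇑τ '' A = Aᶜ := by
    rcases Int.units_eq_one_or (Equiv.Perm.sign σ₀) with hsgn | hsgn
    · exact ⟨σ₀, hsgn, hσ₀img⟩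
    · refine ⟨σ₀ * swap a₁ a₂, ?_, ?_⟩
      · rw [map_mul, hsgn, sign_swap ha12]; decide
      · rw [Perm.coe_mul, Set.image_comp, image_swap (iff_of_true ha₁ ha₂), hσ₀img]
  have hτG : τ ∈ G := hG (mem_alternatingGroup.mpr hτsgn)
  have hAne : A ≠ Aᶜ := by
    intro h
    exact (h ▸ ha₁ : a₁ ∈ Aᶜ) ha₁
  have hτM : τ ∈ M := ⟨Or.inr hτimg, hτG⟩
  have hτH : τ ∉ SP A ⊓ G := by
    intro hmem
    have h1 : ⇑τ '' A = A := mem_SP.mp hmem.1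
    exact hAne (h1.symm.trans hτimg)
  have hlt1 : SP A ⊓ G < M := by
    refine lt_of_le_of_ne ?_ ?_
    · rintro σ ⟨h1, h2⟩
      exact ⟨Or.inl (mem_SP.mp h1), h2⟩
    · intro hcontra
      rw [← hcontra] at hτM
      exact hτH hτM
  have hMG : M ≤ G := fun σ hσ => hσ.2
  -- M ≠ G
  have hρ : c3 a₁ a₂ z₀ ∈ G := by
    apply hG
    exact mem_alternatingGroup.mpr (sign_c3 ha12 (neAC _ _ ha₂ hz₀))
  have hρM : c3 a₁ a₂ z₀ ∉ M := by
    rintro ⟨himg | himg, _⟩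
    · have : z₀ ∈ A := by
        rw [← himg]
        exact ⟨a₂, ha₂, c3_snd (neAC _ _ ha₁ hz₀) (neAC _ _ ha₂ hz₀)⟩
      exact hz₀ this
    · have : a₂ ∈ Aᶜ := by
        rw [← himg]
        exact ⟨a₁, ha₁, c3_fst ha12 (neAC _ _ ha₁ hz₀)⟩
      exact this ha₂
  rintro ⟨hlt, hmax⟩
  have := hmax M hlt1 hMG
  rw [this] at hρM
  exact hρM hρ

end Fin

/-- bridge: coatoms among preimages correspond to relative maximality in the range. -/
theorem bridge {X Y : Type*} [Group X] [Group Y] (f : X →* Y) (C : Subgroup Y) :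
    IsCoatom (Subgroup.comap f C) ↔ MaxRel f.range (C ⊓ f.range) := by
  have hcomap_range : Subgroup.comap f f.range = ⊤ := by
    rw [eq_top_iff]
    intro x _
    exact ⟨x, rfl⟩
  have hcomap_inf : Subgroup.comap f (C ⊓ f.range) = Subgroup.comap f C := by
    rw [Subgroup.comap_inf, hcomap_range, inf_top_eq]
  constructor
  · rintro ⟨hne, hmax⟩
    constructor
    · refine lt_of_le_of_ne inf_le_right ?_
      intro heqr
      apply hne
      rw [eq_top_iff]
      intro x _
      have : f x ∈ f.range := ⟨x, rfl⟩
      rw [← heqr] at this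
      exact this.1
    · intro K hlt hle
      have h1 : Subgroup.comap f C < Subgroup.comap f K := by
        rw [← hcomap_inf]
        refine lt_of_le_of_ne (Subgroup.comap_mono hlt.le) ?_
        intro heq2
        have := congrArg (Subgroup.map f) heq2
        rw [Subgroup.map_comap_eq, Subgroup.map_comap_eq, inf_of_le_right hle,
          inf_of_le_right (inf_le_right : C ⊓ f.range ≤ f.range)] at this
        exact hlt.ne this
      have h2 := hmax _ h1
      have := congrArg (Subgroup.map f) h2
      rw [Subgroup.map_comap_eq, inf_of_le_right hle, ← MonoidHom.range_eq_map] at this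
      exact this
  · rintro ⟨hlt, hmax⟩
    constructor
    · intro htop
      have := congrArg (Subgroup.map f) htop
      rw [Subgroup.map_comap_eq, ← MonoidHom.range_eq_map] at this
      rw [inf_comm] at this
      exact hlt.ne this
    · intro D hD
      have hKle : Subgroup.map f D ≤ f.range := Subgroup.map_le_range f D
      have hlt2 : C ⊓ f.range < Subgroup.map f D := by
        refine lt_of_le_of_ne ?_ ?_
        · have : C ⊓ f.range = Subgroup.map f (Subgroup.comap f C) := by
            rw [Subgroup.map_comap_eq, inf_comm]
          rw [this]
          exact Subgroup.map_mono hD.le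
        · intro heq2
          have hDle : D ≤ Subgroup.comap f (Subgroup.map f D) := Subgroup.le_comap_map f D
          rw [← heq2, hcomap_inf] at hDle
          exact hD.not_ge hDle
      have h2 := hmax _ hlt2 hKle
      have h3 : Subgroup.comap f (Subgroup.map f D) = ⊤ := by rw [h2, hcomap_range]
      rw [Subgroup.comap_map_eq] at h3
      have hker : f.ker ≤ D := by
        refine le_trans ?_ hD.le
        intro x hx
        simp only [Subgroup.mem_comap]
        rw [MonoidHom.mem_ker] at hx
        rw [hx]
        exact one_mem C
      rw [sup_of_le_left hker] at h3
      exact h3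

section Poly
open MvPolynomial

variable {k : Type*} [Field k] [Fintype k] [DecidableEq k] [CharP k 2] {n : ℕ}

/-- the point map induced by an algebra endomorphism (contravariantly). -/
noncomputable def T (φ : MvPolynomial (Fin n) k ≃ₐ[k] MvPolynomial (Fin n) k) (p : Fin n → k) :
    Fin n → k := fun j => aeval p (φ (X j))

theorem aeval_comp_eq (φ : MvPolynomial (Fin n) k ≃ₐ[k] MvPolynomial (Fin n) k)
    (p : Fin n → k) (q : MvPolynomial (Fin n) k) :
    aeval p (φ q) = aeval (T φ p) q := by
  have h : (aeval p).comp φ.toAlgHom = aeval (T φ p) := by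
    apply MvPolynomial.algHom_ext
    intro j
    simp [T]
  calc aeval p (φ q) = ((aeval p).comp φ.toAlgHom) q := rfl
    _ = aeval (T φ p) q := by rw [h]

theorem T_mul (φ ψ : MvPolynomial (Fin n) k ≃ₐ[k] MvPolynomial (Fin n) k) (p : Fin n → k) :
    T (φ * ψ) p = T ψ (T φ p) := by
  funext j
  show aeval p ((φ * ψ) (X j)) = _
  rw [AlgEquiv.mul_apply, aeval_comp_eq]
  rfl

theorem T_one (p : Fin n → k) : T (1 : MvPolynomial (Fin n) k ≃ₐ[k] MvPolynomial (Fin n) k)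
    p = p := by
  funext j
  show aeval p ((1 : MvPolynomial (Fin n) k ≃ₐ[k] MvPolynomial (Fin n) k) (X j)) = p j
  rw [AlgEquiv.one_apply, aeval_X]

/-- the point permutation induced by an automorphism. -/
noncomputable def piPerm (φ : MvPolynomial (Fin n) k ≃ₐ[k] MvPolynomial (Fin n) k) :
    Equiv.Perm (Fin n → k) where
  toFun := T φ
  invFun := T φ⁻¹
  left_inv := fun p => by rw [← T_mul, mul_inv_cancel, T_one]
  right_inv := fun p => by rw [← T_mul, inv_mul_cancel, T_one]

@[simp] theorem piPerm_apply (φ : MvPolynomial (Fin n) k ≃ₐ[k] MvPolynomial (Fin n) k)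
    (p : Fin n → k) : piPerm φ p = T φ p := rfl

/-- the group homomorphism from the automorphism group to the permutations of points. -/
noncomputable def piHom : (MvPolynomial (Fin n) k ≃ₐ[k] MvPolynomial (Fin n) k) →* Equiv.Perm (Fin n → k) :=
  MonoidHom.mk' (fun φ => piPerm φ⁻¹) (by
    intro φ ψ
    refine Equiv.ext fun p => ?_
    show T (φ * ψ)⁻¹ p = T φ⁻¹ (T ψ⁻¹ p)
    rw [mul_inv_rev, T_mul])

theorem piHom_apply (φ : MvPolynomial (Fin n) k ≃ₐ[k] MvPolynomial (Fin n) k)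
    (p : Fin n → k) : piHom φ p = T φ⁻¹ p := rfl

/-- an involutive substitution automorphism `Xᵢ ↦ Xᵢ + Pᵢ` in characteristic two. -/
noncomputable def mvMove (P : Fin n → MvPolynomial (Fin n) k)
    (hP : ∀ l, aeval (fun j => X j + P j) (P l) = P l) :
    MvPolynomial (Fin n) k ≃ₐ[k] MvPolynomial (Fin n) k := by
  refine AlgEquiv.ofAlgHom (aeval (fun j => X j + P j)) (aeval (fun j => X j + P j)) ?_ ?_ <;>
  · apply MvPolynomial.algHom_ext
    intro l
    simp only [AlgHom.coe_comp, Function.comp_apply, aeval_X, AlgHom.coe_id, id_eq]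
    rw [map_add, aeval_X, hP l, add_assoc, CharTwo.add_self_eq_zero, add_zero]

theorem mvMove_inv (P : Fin n → MvPolynomial (Fin n) k)
    (hP : ∀ l, aeval (fun j => X j + P j) (P l) = P l) :
    (mvMove P hP)⁻¹ = mvMove P hP := rfl

/-- the point function of `mvMove`. -/
noncomputable def mvFun (P : Fin n → MvPolynomial (Fin n) k) : (Fin n → k) → (Fin n → k) :=
  fun v j => v j + aeval v (P j)

theorem piHom_mvMove (P : Fin n → MvPolynomial (Fin n) k)
    (hP : ∀ l, aeval (fun j => X j + P j) (P l) = P l) (v : Fin n → k) :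
    piHom (mvMove P hP) v = mvFun P v := by
  rw [piHom_apply, mvMove_inv]
  funext j
  show aeval v ((mvMove P hP) (X j)) = _
  have : (mvMove P hP) (X j) = X j + P j := by
    show (aeval (fun j => X j + P j)) (X j) = _
    rw [aeval_X]
  rw [this, map_add, aeval_X]
  rfl

theorem move_mem (P : Fin n → MvPolynomial (Fin n) k)
    (hP : ∀ l, aeval (fun j => X j + P j) (P l) = P l) (σ : Equiv.Perm (Fin n → k))
    (hσ : ∀ v, σ v = mvFun P v) : σ ∈ piHom.range := by
  refine ⟨mvMove P hP, ?_⟩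
  refine Equiv.ext fun v => ?_
  rw [piHom_mvMove, hσ]

section Moves
/-! ### concrete moves -/

theorem add_self_zero {v w : Fin n → k} : (v + w) + w = v := by
  funext j
  show (v j + w j) + w j = v j
  rw [add_assoc, CharTwo.add_self_eq_zero, add_zero]

/-- translation by `w`. -/
def trPerm (w : Fin n → k) : Equiv.Perm (Fin n → k) :=
  Function.Involutive.toPerm (fun v => v + w) (fun v => add_self_zero)

@[simp] theorem trPerm_apply (w v : Fin n → k) : trPerm w v = v + w := rfl

theorem trPerm_mem (w : Fin n → k) : trPerm w ∈ (piHom (k := k) (n := n)).range := by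
  apply move_mem (fun l => MvPolynomial.C (w l))
  · intro l
    rw [MvPolynomial.aeval_C, MvPolynomial.algebraMap_eq]
  · intro v
    funext j
    show v j + w j = v j + _
    rw [MvPolynomial.aeval_C, Algebra.algebraMap_self_apply]

/-- condition of being in the `i`-fiber through `a`. -/
def fibCond (i : Fin n) (a v : Fin n → k) : Prop := ∀ l, l ≠ i → v l = a l

instance (i : Fin n) (a v : Fin n → k) : Decidable (fibCond i a v) := by
  unfold fibCond; infer_instance

/-- translate the `i`-fiber through `a` by `c` in direction `i`, fixing everything else. -/
def fibFun (i : Fin n) (c : k) (a : Fin n → k) : (Fin n → k) → (Fin n → k) :=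
  fun v j => v j + if j = i ∧ fibCond i a v then c else 0

theorem fibFun_off {i : Fin n} {c : k} {a v : Fin n → k} {l : Fin n} (hl : l ≠ i) :
    fibFun i c a v l = v l := by
  simp [fibFun, hl]

theorem fibCond_fibFun (i : Fin n) (c : k) (a v : Fin n → k) :
    fibCond i a (fibFun i c a v) ↔ fibCond i a v := by
  constructor <;> intro h l hl
  · have h2 := h l hl
    rwa [fibFun_off hl] at h2
  · rw [fibFun_off hl]
    exact h l hl

theorem fibFun_invol (i : Fin n) (c : k) (a : Fin n → k) :
    Function.Involutive (fibFun i c a) := by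
  intro v
  by_cases h : fibCond i a v
  · have h2 : fibCond i a (fibFun i c a v) := (fibCond_fibFun i c a v).mpr h
    funext j
    rcases eq_or_ne j i with rfl | hj
    · have e1 : fibFun j c a v j = v j + c := by simp [fibFun, h]
      have e2 : fibFun j c a (fibFun j c a v) j = fibFun j c a v j + c := by
        simp [fibFun, h2]
      rw [e2, e1, add_assoc, CharTwo.add_self_eq_zero, add_zero]
    · rw [fibFun_off hj, fibFun_off hj]
  · have h2 : ¬ fibCond i a (fibFun i c a v) := fun hh => h ((fibCond_fibFun i c a v).mp hh)
    funext j
    rcases eq_or_ne j i with rfl | hj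
    · have e1 : fibFun j c a v j = v j := by simp [fibFun, h]
      have e2 : fibFun j c a (fibFun j c a v) j = fibFun j c a v j := by simp [fibFun, h2]
      rw [e2, e1]
    · rw [fibFun_off hj, fibFun_off hj]

/-- the fiber move as a permutation. -/
def fibPerm (i : Fin n) (c : k) (a : Fin n → k) : Equiv.Perm (Fin n → k) :=
  Function.Involutive.toPerm (fibFun i c a) (fibFun_invol i c a)

@[simp] theorem fibPerm_apply (i : Fin n) (c : k) (a v : Fin n → k) :
    fibPerm i c a v = fibFun i c a v := rfl

theorem fibPerm_cond {i : Fin n} {c : k} {a v : Fin n → k} (h : fibCond i a v) (j : Fin n) :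
    fibPerm i c a v j = v j + if j = i then c else 0 := by
  rcases eq_or_ne j i with rfl | hj
  · show v j + _ = _
    rw [if_pos ⟨rfl, h⟩, if_pos rfl]
  · rw [fibPerm_apply, fibFun_off hj, if_neg hj, add_zero]

theorem fibPerm_not_cond {i : Fin n} {c : k} {a v : Fin n → k} (h : ¬ fibCond i a v) :
    fibPerm i c a v = v := by
  funext j
  rcases eq_or_ne j i with rfl | hj
  · show v j + _ = _
    rw [if_neg (fun hh => h hh.2), add_zero]
  · rw [fibPerm_apply, fibFun_off hj]

theorem chartwo_add_eq_zero_iff {x y : k} : x + y = 0 ↔ x = y := by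
  rw [add_eq_zero_iff_eq_neg, CharTwo.neg_eq]

theorem delta_term (x y : k) :
    (1 : k) + (x + y) ^ (Fintype.card k - 1) = if x = y then 1 else 0 := by
  rcases eq_or_ne x y with rfl | h
  · rw [if_pos rfl, CharTwo.add_self_eq_zero, zero_pow, add_zero]
    have := Fintype.one_lt_card (α := k)
    omega
  · rw [if_neg h,
      FiniteField.pow_card_sub_one_eq_one _ (fun hh => h (chartwo_add_eq_zero_iff.mp hh)),
      CharTwo.add_self_eq_zero]

/-- interpolation polynomial for the indicator of the `i`-fiber through `a`, times `c`. -/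
noncomputable def deltaPoly (i : Fin n) (c : k) (a : Fin n → k) : MvPolynomial (Fin n) k :=
  MvPolynomial.C c * ∏ l ∈ Finset.univ.erase i,
    (1 + (MvPolynomial.X l + MvPolynomial.C (a l)) ^ (Fintype.card k - 1))

theorem aeval_deltaPoly (i : Fin n) (c : k) (a v : Fin n → k) :
    MvPolynomial.aeval v (deltaPoly i c a) = if fibCond i a v then c else 0 := by
  rw [deltaPoly, map_mul, map_prod, MvPolynomial.aeval_C, Algebra.algebraMap_self_apply]
  have hterm : ∀ l ∈ Finset.univ.erase i,
      MvPolynomial.aeval v (1 + (MvPolynomial.X l + MvPolynomial.C (a l)) ^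
        (Fintype.card k - 1)) = if v l = a l then 1 else 0 := by
    intro l _
    rw [map_add, map_one, map_pow, map_add, MvPolynomial.aeval_X, MvPolynomial.aeval_C,
      Algebra.algebraMap_self_apply, delta_term]
  rw [Finset.prod_congr rfl hterm]
  by_cases h : fibCond i a v
  · rw [if_pos h, Finset.prod_eq_one, mul_one]
    intro l hl
    rw [if_pos (h l (Finset.mem_erase.mp hl).1)]
  · rw [if_neg h]
    unfold fibCond at h
    push_neg at h
    obtain ⟨l, hl, hvl⟩ := h
    have hz : (∏ x ∈ Finset.univ.erase i, if v x = a x then (1 : k) else 0) = 0 :=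
      Finset.prod_eq_zero (Finset.mem_erase.mpr ⟨hl, Finset.mem_univ l⟩) (if_neg hvl)
    rw [hz, mul_zero]

theorem fibPerm_mem (i : Fin n) (c : k) (a : Fin n → k) :
    fibPerm i c a ∈ (piHom (k := k) (n := n)).range := by
  apply move_mem (fun l => if l = i then deltaPoly i c a else 0)
  · have key : ∀ (u : Fin n → MvPolynomial (Fin n) k), (∀ l, l ≠ i → u l = MvPolynomial.X l) →
        (MvPolynomial.aeval u) (deltaPoly i c a) = deltaPoly i c a := by
      intro u hu
      rw [deltaPoly, map_mul, map_prod, MvPolynomial.aeval_C, MvPolynomial.algebraMap_eq]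
      congr 1
      refine Finset.prod_congr rfl ?_
      intro l hl
      have hl' : l ≠ i := (Finset.mem_erase.mp hl).1
      rw [map_add, map_one, map_pow, map_add, MvPolynomial.aeval_X, MvPolynomial.aeval_C,
        MvPolynomial.algebraMap_eq, hu l hl']
    intro l
    rcases eq_or_ne l i with rfl | hl
    · simp only [if_pos rfl]
      exact key _ (fun l' hl' => by simp [hl'])
    · simp only [if_neg hl, map_zero]
  · intro v
    funext j
    show fibFun i c a v j = v j + _
    rcases eq_or_ne j i with rfl | hj
    · show fibFun j c a v j = v j + (MvPolynomial.aeval v) (if j = j then deltaPoly j c a else 0)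
      rw [if_pos rfl, aeval_deltaPoly]
      show v j + _ = _
      by_cases h : fibCond j a v
      · rw [if_pos ⟨rfl, h⟩, if_pos h]
      · rw [if_neg (fun hh => h hh.2), if_neg h]
    · show fibFun i c a v j = v j + (MvPolynomial.aeval v) (if j = i then deltaPoly i c a else 0)
      rw [fibFun_off hj, if_neg hj, map_zero, add_zero]

/-! ### transitivity -/

/-- basis-like point. -/
def pt (i : Fin n) (c : k) : Fin n → k := fun j => if j = i then c else 0

theorem pt_self (i : Fin n) (c : k) : pt i c i = c := if_pos rfl
theorem pt_off {i j : Fin n} (c : k) (h : j ≠ i) : pt i c j = 0 := if_neg h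

theorem fibPerm_cond' {i : Fin n} {c : k} {a v : Fin n → k} (h : fibCond i a v) :
    fibPerm i c a v = fun j => v j + if j = i then c else 0 :=
  funext (fibPerm_cond h)

theorem clear_lemma (i0 : Fin n) (s : Finset (Fin n)) :
    ∀ v : Fin n → k, v i0 = 1 → (∀ j, j ≠ i0 → j ∉ s → v j = 0) →
    ∃ g ∈ (piHom (k := k) (n := n)).range, g 0 = 0 ∧ g v = pt i0 1 := by
  induction s using Finset.induction_on with
  | empty =>
    intro v h1 h2
    refine ⟨1, one_mem _, rfl, ?_⟩
    show v = pt i0 1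
    funext j
    rcases eq_or_ne j i0 with rfl | hj
    · rw [h1, pt_self]
    · rw [h2 j hj (Finset.notMem_empty j), pt_off _ hj]
  | @insert a s ha IH =>
    intro v h1 h2
    by_cases hva : a = i0 ∨ v a = 0
    · refine IH v h1 ?_
      intro j hj hjs
      rcases eq_or_ne j a with rfl | hja
      · rcases hva with h | h
        · exact absurd h hj
        · exact h
      · exact h2 j hj (by simp [hja, hjs])
    · push_neg at hva
      obtain ⟨hai0, hva0⟩ := hva
      have hcv : fibCond a v v := fun l _ => rfl
      set v' : Fin n → k := fun j => v j + if j = a then v a else 0 with hv'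
      have hg₁v : fibPerm a (v a) v v = v' := fibPerm_cond' hcv
      have hg₁0 : fibPerm a (v a) v 0 = 0 := by
        apply fibPerm_not_cond
        intro hcond
        have := hcond i0 (Ne.symm hai0)
        rw [h1] at this
        exact one_ne_zero this.symm
      have hv'i0 : v' i0 = 1 := by
        rw [hv']
        show v i0 + _ = 1
        rw [if_neg (Ne.symm hai0), add_zero, h1]
      have hv'a : v' a = 0 := by
        rw [hv']
        show v a + _ = 0
        rw [if_pos rfl, CharTwo.add_self_eq_zero]
      have hv'j : ∀ j, j ≠ a → v' j = v j := by
        intro j hj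
        rw [hv']
        show v j + _ = v j
        rw [if_neg hj, add_zero]
      obtain ⟨g₂, hg₂R, hg₂0, hg₂v⟩ := IH v' hv'i0 (by
        intro j hj hjs
        rcases eq_or_ne j a with rfl | hja
        · exact hv'a
        · rw [hv'j j hja]
          exact h2 j hj (by simp [hja, hjs]))
      refine ⟨g₂ * fibPerm a (v a) v, mul_mem hg₂R (fibPerm_mem a (v a) v), ?_, ?_⟩
      · rw [Equiv.Perm.mul_apply, hg₁0, hg₂0]
      · rw [Equiv.Perm.mul_apply, hg₁v, hg₂v]

theorem reach_offaxis (i0 : Fin n) (v : Fin n → k) (hoff : ∃ j, j ≠ i0 ∧ v j ≠ 0) :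
    ∃ g ∈ (piHom (k := k) (n := n)).range, g 0 = 0 ∧ g v = pt i0 1 := by
  obtain ⟨j₀, hj₀, hvj₀⟩ := hoff
  have hcv : fibCond i0 v v := fun l _ => rfl
  set v₁ : Fin n → k := fun j => v j + if j = i0 then 1 + v i0 else 0 with hv₁
  have hg₁v : fibPerm i0 (1 + v i0) v v = v₁ := fibPerm_cond' hcv
  have hg₁0 : fibPerm i0 (1 + v i0) v 0 = 0 := by
    apply fibPerm_not_cond
    intro hcond
    exact hvj₀ (hcond j₀ hj₀).symm
  have hv₁i0 : v₁ i0 = 1 := by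
    rw [hv₁]
    show v i0 + _ = 1
    rw [if_pos rfl, add_comm 1 (v i0), ← add_assoc, CharTwo.add_self_eq_zero, zero_add]
  obtain ⟨g₂, hg₂R, hg₂0, hg₂v⟩ := clear_lemma i0 Finset.univ v₁ hv₁i0
    (fun j _ hjs => absurd (Finset.mem_univ j) hjs)
  refine ⟨g₂ * fibPerm i0 (1 + v i0) v, mul_mem hg₂R (fibPerm_mem _ _ _), ?_, ?_⟩
  · rw [Equiv.Perm.mul_apply, hg₁0, hg₂0]
  · rw [Equiv.Perm.mul_apply, hg₁v, hg₂v]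

theorem reach0 (hn : 2 ≤ n) (v : Fin n → k) (hv : v ≠ 0) :
    ∃ g ∈ (piHom (k := k) (n := n)).range, g 0 = 0 ∧
      g v = pt ⟨0, by omega⟩ 1 := by
  set i0 : Fin n := ⟨0, by omega⟩ with hi0
  set i1 : Fin n := ⟨1, by omega⟩ with hi1
  have hi01 : i0 ≠ i1 := by
    rw [hi0, hi1]
    intro h
    exact absurd (congrArg Fin.val h) (by norm_num)
  by_cases hoff : ∃ j, j ≠ i0 ∧ v j ≠ 0
  · exact reach_offaxis i0 v hoff
  · push_neg at hoff
    have hvi0 : v i0 ≠ 0 := by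
      intro h0
      apply hv
      funext j
      rcases eq_or_ne j i0 with rfl | hj
      · exact h0
      · exact hoff j hj
    have hcv : fibCond i1 v v := fun l _ => rfl
    set v₁ : Fin n → k := fun j => v j + if j = i1 then 1 else 0 with hv₁
    have hg₁v : fibPerm i1 1 v v = v₁ := fibPerm_cond' hcv
    have hg₁0 : fibPerm i1 1 v 0 = 0 := by
      apply fibPerm_not_cond
      intro hcond
      exact hvi0 (hcond i0 hi01).symm
    have hv₁i1 : v₁ i1 ≠ 0 := by
      rw [hv₁]
      show v i1 + _ ≠ 0
      rw [if_pos rfl, hoff i1 (Ne.symm hi01), zero_add]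
      exact one_ne_zero
    obtain ⟨g₂, hg₂R, hg₂0, hg₂v⟩ := reach_offaxis i0 v₁ ⟨i1, Ne.symm hi01, hv₁i1⟩
    refine ⟨g₂ * fibPerm i1 1 v, mul_mem hg₂R (fibPerm_mem _ _ _), ?_, ?_⟩
    · rw [Equiv.Perm.mul_apply, hg₁0, hg₂0]
    · rw [Equiv.Perm.mul_apply, hg₁v, hg₂v]

theorem canon_pair (hn : 2 ≤ n) (x y : Fin n → k) (hxy : x ≠ y) :
    ∃ g ∈ (piHom (k := k) (n := n)).range, g x = 0 ∧ g y = pt ⟨0, by omega⟩ 1 := by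
  have htr : trPerm x x = 0 := by
    show x + x = 0
    funext j
    exact CharTwo.add_self_eq_zero (x j)
  have hyx : y + x ≠ 0 := by
    intro h
    apply hxy
    funext j
    have := congrFun h j
    exact (chartwo_add_eq_zero_iff.mp this).symm
  obtain ⟨g₂, hg₂R, hg₂0, hg₂v⟩ := reach0 hn (y + x) hyx
  refine ⟨g₂ * trPerm x, mul_mem hg₂R (trPerm_mem x), ?_, ?_⟩
  · rw [Equiv.Perm.mul_apply, htr, hg₂0]
  · rw [Equiv.Perm.mul_apply, trPerm_apply, hg₂v]

theorem two_trans (hn : 2 ≤ n) (x y x' y' : Fin n → k) (hxy : x ≠ y) (hxy' : x' ≠ y') :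
    ∃ g ∈ (piHom (k := k) (n := n)).range, g x = x' ∧ g y = y' := by
  obtain ⟨g₁, hg₁R, hg₁x, hg₁y⟩ := canon_pair hn x y hxy
  obtain ⟨g₂, hg₂R, hg₂x, hg₂y⟩ := canon_pair hn x' y' hxy'
  refine ⟨g₂⁻¹ * g₁, mul_mem (inv_mem hg₂R) hg₁R, ?_, ?_⟩
  · rw [Equiv.Perm.mul_apply, hg₁x, ← hg₂x, ← Equiv.Perm.mul_apply, inv_mul_cancel, Equiv.Perm.one_apply]
  · rw [Equiv.Perm.mul_apply, hg₁y, ← hg₂y, ← Equiv.Perm.mul_apply, inv_mul_cancel, Equiv.Perm.one_apply]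

theorem cyc_mem (hn : 2 ≤ n) :
    c3 (0 : Fin n → k) (pt ⟨0, by omega⟩ 1) (pt ⟨1, by omega⟩ 1) ∈
      (piHom (k := k) (n := n)).range := by
  set i0 : Fin n := ⟨0, by omega⟩ with hi0
  set i1 : Fin n := ⟨1, by omega⟩ with hi1
  have hi01 : i0 ≠ i1 := by
    rw [hi0, hi1]
    intro h
    exact absurd (congrArg Fin.val h) (by norm_num)
  set e₀ : Fin n → k := pt i0 1 with he₀
  set e₁ : Fin n → k := pt i1 1 with he₁
  set σ : Equiv.Perm (Fin n → k) := fibPerm i0 1 0 with hσ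
  set τ : Equiv.Perm (Fin n → k) := fibPerm i1 1 0 with hτ
  -- distinctness
  have h0e₀ : (0 : Fin n → k) ≠ e₀ := by
    intro h
    have := congrFun h i0
    rw [he₀, pt_self] at this
    exact one_ne_zero this.symm
  have h0e₁ : (0 : Fin n → k) ≠ e₁ := by
    intro h
    have := congrFun h i1
    rw [he₁, pt_self] at this
    exact one_ne_zero this.symm
  have he₀e₁ : e₀ ≠ e₁ := by
    intro h
    have := congrFun h i0
    rw [he₀, pt_self, he₁, pt_off _ hi01] at this
    exact one_ne_zero this
  -- basic values
  have ht0 : τ 0 = e₁ := by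
    rw [hτ, fibPerm_cond' (fun l _ => rfl)]
    funext j
    show (0 : k) + _ = _
    rw [zero_add, he₁]
    rfl
  have hσ0 : σ 0 = e₀ := by
    rw [hσ, fibPerm_cond' (fun l _ => rfl)]
    funext j
    show (0 : k) + _ = _
    rw [zero_add, he₀]
    rfl
  have hσe₁ : σ e₁ = e₁ := by
    apply fibPerm_not_cond
    intro hc
    have := hc i1 (Ne.symm hi01)
    rw [he₁, pt_self] at this
    exact one_ne_zero this
  have hτe₀ : τ e₀ = e₀ := by
    apply fibPerm_not_cond
    intro hc
    have := hc i0 hi01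
    rw [he₀, pt_self] at this
    exact one_ne_zero this
  have hτe₁ : τ e₁ = 0 := by
    have hcond : fibCond i1 (0 : Fin n → k) e₁ := by
      intro l hl
      rw [he₁, pt_off _ hl]
      rfl
    rw [hτ, fibPerm_cond' hcond]
    funext j
    rcases eq_or_ne j i1 with rfl | hj
    · show e₁ i1 + (if i1 = i1 then (1 : k) else 0) = (0 : Fin n → k) i1
      rw [if_pos rfl, he₁, pt_self, CharTwo.add_self_eq_zero]
      rfl
    · show e₁ j + _ = _
      rw [if_neg hj, he₁, pt_off _ hj, add_zero]
      rfl
  have hσe₀ : σ e₀ = 0 := by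
    have hcond : fibCond i0 (0 : Fin n → k) e₀ := by
      intro l hl
      rw [he₀, pt_off _ hl]
      rfl
    rw [hσ, fibPerm_cond' hcond]
    funext j
    rcases eq_or_ne j i0 with rfl | hj
    · show e₀ i0 + (if i0 = i0 then (1 : k) else 0) = (0 : Fin n → k) i0
      rw [if_pos rfl, he₀, pt_self, CharTwo.add_self_eq_zero]
      rfl
    · show e₀ j + _ = _
      rw [if_neg hj, he₀, pt_off _ hj, add_zero]
      rfl
  have hmain : (σ * τ) * (σ * τ) = c3 (0 : Fin n → k) e₀ e₁ := by
    refine Equiv.ext fun v => ?_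
    have hchain : ((σ * τ) * (σ * τ)) v = σ (τ (σ (τ v))) := by
      simp [Equiv.Perm.mul_apply]
    rw [hchain]
    by_cases h0 : fibCond i0 (0 : Fin n → k) v <;>
      by_cases h1 : fibCond i1 (0 : Fin n → k) v
    · -- v = 0
      have hv : v = 0 := by
        funext j
        rcases eq_or_ne j i0 with rfl | hj
        · exact h1 _ hi01
        · exact h0 j hj
      rw [hv, ht0, hσe₁, hτe₁, hσ0, c3_fst h0e₀ h0e₁]
    · -- on the i0-axis, nonzero
      have ht0' : v i0 ≠ 0 := by
        intro hz
        apply h1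
        intro l hl
        rcases eq_or_ne l i0 with rfl | hl0
        · exact hz
        · exact h0 l hl0
      by_cases ht1 : v i0 = 1
      · have hv : v = e₀ := by
          funext j
          rcases eq_or_ne j i0 with rfl | hj
          · rw [ht1, he₀, pt_self]
          · rw [h0 j hj, he₀, pt_off _ hj]
            rfl
        rw [hv, hτe₀, hσe₀, ht0, hσe₁, c3_snd h0e₁ he₀e₁]
      · -- generic axis point : fixed
        have hτv : τ v = v := by
          apply fibPerm_not_cond
          intro hc
          exact ht0' (hc i0 hi01)
        set v₂ : Fin n → k := fun j => v j + if j = i0 then 1 else 0 with hv₂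
        have hσv : σ v = v₂ := by
          rw [hσ, fibPerm_cond' h0]
        have hv₂i0 : v₂ i0 ≠ 0 := by
          rw [hv₂]
          show v i0 + _ ≠ 0
          rw [if_pos rfl]
          intro hc
          exact ht1 (chartwo_add_eq_zero_iff.mp hc)
        have hτv₂ : τ v₂ = v₂ := by
          apply fibPerm_not_cond
          intro hc
          exact hv₂i0 (hc i0 hi01)
        have hcond₂ : fibCond i0 (0 : Fin n → k) v₂ := by
          intro l hl
          rw [hv₂]
          show v l + _ = _
          rw [if_neg hl, add_zero, h0 l hl]
        have hσv₂ : σ v₂ = v := by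
          rw [hσ, fibPerm_cond' hcond₂]
          funext j
          rcases eq_or_ne j i0 with rfl | hj
          · show v₂ i0 + (if i0 = i0 then (1 : k) else 0) = v i0
            rw [if_pos rfl, hv₂]
            show (v i0 + if i0 = i0 then (1 : k) else 0) + 1 = v i0
            rw [if_pos rfl, add_assoc, CharTwo.add_self_eq_zero, add_zero]
          · show v₂ j + _ = v j
            rw [if_neg hj, add_zero, hv₂]
            show v j + _ = v j
            rw [if_neg hj, add_zero]
        rw [hτv, hσv, hτv₂, hσv₂]
        have hvne0 : v ≠ 0 := by
          intro h
          exact ht0' (by rw [h]; rfl)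
        have hvnee₀ : v ≠ e₀ := by
          intro h
          apply ht1
          rw [h, he₀, pt_self]
        have hvnee₁ : v ≠ e₁ := by
          intro h
          apply ht0'
          rw [h, he₁, pt_off _ hi01]
        rw [c3_other hvne0 hvnee₀ hvnee₁]
    · -- on the i1-axis, nonzero
      have hs0 : v i1 ≠ 0 := by
        intro hz
        apply h0
        intro l hl
        rcases eq_or_ne l i1 with rfl | hl1
        · exact hz
        · exact h1 l hl1
      by_cases hs1 : v i1 = 1
      · have hv : v = e₁ := by
          funext j
          rcases eq_or_ne j i1 with rfl | hj
          · rw [hs1, he₁, pt_self]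
          · rw [h1 j hj, he₁, pt_off _ hj]
            rfl
        rw [hv, hτe₁, hσ0, hτe₀, hσe₀, c3_thd]
      · set v₃ : Fin n → k := fun j => v j + if j = i1 then 1 else 0 with hv₃
        have hτv : τ v = v₃ := by rw [hτ, fibPerm_cond' h1]
        have hv₃i1 : v₃ i1 ≠ 0 := by
          rw [hv₃]
          show v i1 + _ ≠ 0
          rw [if_pos rfl]
          intro hc
          exact hs1 (chartwo_add_eq_zero_iff.mp hc)
        have hσv₃ : σ v₃ = v₃ := by
          apply fibPerm_not_cond
          intro hc
          exact hv₃i1 (hc i1 (Ne.symm hi01))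
        have hcond₃ : fibCond i1 (0 : Fin n → k) v₃ := by
          intro l hl
          rw [hv₃]
          show v l + _ = _
          rw [if_neg hl, add_zero, h1 l hl]
        have hτv₃ : τ v₃ = v := by
          rw [hτ, fibPerm_cond' hcond₃]
          funext j
          rcases eq_or_ne j i1 with rfl | hj
          · show v₃ i1 + (if i1 = i1 then (1 : k) else 0) = v i1
            rw [if_pos rfl, hv₃]
            show (v i1 + if i1 = i1 then (1 : k) else 0) + 1 = v i1
            rw [if_pos rfl, add_assoc, CharTwo.add_self_eq_zero, add_zero]
          · show v₃ j + _ = v j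
            rw [if_neg hj, add_zero, hv₃]
            show v j + _ = v j
            rw [if_neg hj, add_zero]
        have hσv : σ v = v := by
          apply fibPerm_not_cond
          intro hc
          exact hs0 (hc i1 (Ne.symm hi01))
        rw [hτv, hσv₃, hτv₃, hσv]
        have hvne0 : v ≠ 0 := by
          intro h
          exact hs0 (by rw [h]; rfl)
        have hvnee₀ : v ≠ e₀ := by
          intro h
          apply hs0
          rw [h, he₀, pt_off _ (Ne.symm hi01)]
        have hvnee₁ : v ≠ e₁ := by
          intro h
          apply hs1
          rw [h, he₁, pt_self]
        rw [c3_other hvne0 hvnee₀ hvnee₁]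
    · -- generic point : fixed by everything
      have hτv : τ v = v := fibPerm_not_cond (fun hc => h1 hc)
      have hσv : σ v = v := fibPerm_not_cond (fun hc => h0 hc)
      rw [hτv, hσv, hτv, hσv]
      have hvne0 : v ≠ 0 := by
        intro h
        apply h0
        intro l hl
        rw [h]
      have hvnee₀ : v ≠ e₀ := by
        intro h
        apply h0
        intro l hl
        rw [h, he₀, pt_off _ hl]
        rfl
      have hvnee₁ : v ≠ e₁ := by
        intro h
        apply h1
        intro l hl
        rw [h, he₁, pt_off _ hl]
        rfl
      rw [c3_other hvne0 hvnee₀ hvnee₁]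
  rw [← hmain]
  have hσR : σ ∈ (piHom (k := k) (n := n)).range := fibPerm_mem _ _ _
  have hτR : τ ∈ (piHom (k := k) (n := n)).range := fibPerm_mem _ _ _
  exact mul_mem (mul_mem hσR hτR) (mul_mem hσR hτR)

theorem alt_le_range (hn : 2 ≤ n) :
    alternatingGroup (Fin n → k) ≤ (piHom (k := k) (n := n)).range := by
  apply alt_le_of_c3
  have hi01 : (⟨0, by omega⟩ : Fin n) ≠ ⟨1, by omega⟩ := by
    intro h
    exact absurd (congrArg Fin.val h) (by norm_num)
  have h01 : (0 : Fin n → k) ≠ pt ⟨0, by omega⟩ 1 := by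
    intro h
    have := congrFun h ⟨0, by omega⟩
    rw [pt_self] at this
    exact one_ne_zero this.symm
  have h03 : (0 : Fin n → k) ≠ pt ⟨1, by omega⟩ 1 := by
    intro h
    have := congrFun h ⟨1, by omega⟩
    rw [pt_self] at this
    exact one_ne_zero this.symm
  have h02 : pt (⟨0, by omega⟩ : Fin n) (1 : k) ≠ pt ⟨1, by omega⟩ 1 := by
    intro h
    have := congrFun h ⟨0, by omega⟩
    rw [pt_self, pt_off _ hi01] at this
    exact one_ne_zero this
  exact all_c3 (fun x y x' y' hxy hxy' => two_trans hn x y x' y' hxy hxy')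
    h01 h02 h03 (cyc_mem hn)

/-! ### the case `|k| = 2` -/

theorem k_cases (hq : Fintype.card k = 2) (a : k) : a = 0 ∨ a = 1 := by
  have h := FiniteField.pow_card a
  rw [hq, pow_two] at h
  have h2 : a * (a - 1) = 0 := by rw [mul_sub, mul_one, h, sub_self]
  rcases mul_eq_zero.mp h2 with h3 | h3
  · exact Or.inl h3
  · exact Or.inr (sub_eq_zero.mp h3)

theorem k_eq_of_ne (hq : Fintype.card k = 2) {x y z : k} (hx : x ≠ z) (hy : y ≠ z) :
    x = y := by
  rcases k_cases hq x with rfl | rfl <;> rcases k_cases hq y with rfl | rfl <;>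
    rcases k_cases hq z with rfl | rfl <;> simp_all

theorem swap_adj_mem (hq : Fintype.card k = 2) (v w : Fin n → k) (i : Fin n)
    (hvwi : v i ≠ w i) (hoff : ∀ l, l ≠ i → v l = w l) :
    Equiv.swap v w ∈ (piHom (k := k) (n := n)).range := by
  have hvw : v ≠ w := fun h => hvwi (congrFun h i)
  have hswap : Equiv.swap v w = fibPerm i (v i + w i) v := by
    refine Equiv.ext fun u => ?_
    by_cases hcond : fibCond i v u
    · have huvw : u = v ∨ u = w := by
        by_cases hui : u i = v i
        · left
          funext l
          rcases eq_or_ne l i with rfl | hl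
          · exact hui
          · exact hcond l hl
        · right
          funext l
          rcases eq_or_ne l i with rfl | hl
          · exact k_eq_of_ne hq hui (Ne.symm hvwi)
          · exact (hcond l hl).trans (hoff l hl)
      have hfv : fibPerm i (v i + w i) v v = w := by
        rw [fibPerm_cond' (fun l _ => rfl)]
        funext l
        rcases eq_or_ne l i with rfl | hl
        · show v l + _ = w l
          rw [if_pos rfl, ← add_assoc, CharTwo.add_self_eq_zero, zero_add]
        · show v l + _ = w l
          rw [if_neg hl, add_zero, hoff l hl]
      have hfw : fibPerm i (v i + w i) v w = v := by
        have hcw : fibCond i v w := fun l hl => (hoff l hl).symm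
        rw [fibPerm_cond' hcw]
        funext l
        rcases eq_or_ne l i with rfl | hl
        · show w l + _ = v l
          rw [if_pos rfl, add_comm (v l) (w l), ← add_assoc, CharTwo.add_self_eq_zero,
            zero_add]
        · show w l + _ = v l
          rw [if_neg hl, add_zero, hoff l hl]
      rcases huvw with rfl | rfl
      · rw [Equiv.swap_apply_left, hfv]
      · rw [Equiv.swap_apply_right, hfw]
    · have huv : u ≠ v := fun h => hcond (h ▸ (fun l _ => rfl))
      have huw : u ≠ w := by
        intro h
        apply hcond
        intro l hl
        rw [h]
        exact (hoff l hl).symm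
      rw [Equiv.swap_apply_of_ne_of_ne huv huw, fibPerm_not_cond hcond]
  rw [hswap]
  exact fibPerm_mem _ _ _

theorem swaps_mem (hq : Fintype.card k = 2) :
    ∀ (d : ℕ) (v w : Fin n → k), v ≠ w →
      (Finset.univ.filter (fun l => v l ≠ w l)).card ≤ d →
      Equiv.swap v w ∈ (piHom (k := k) (n := n)).range := by
  intro d
  induction d with
  | zero =>
    intro v w hvw hcard
    exfalso
    apply hvw
    funext l
    by_contra hl
    have : l ∈ Finset.univ.filter (fun l => v l ≠ w l) := by
      simp [hl]
    rw [Finset.card_eq_zero.mp (Nat.le_zero.mp hcard)] at this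
    exact absurd this (Finset.notMem_empty l)
  | succ d IH =>
    intro v w hvw hcard
    have hne : ∃ i, v i ≠ w i := by
      by_contra h
      push_neg at h
      exact hvw (funext h)
    obtain ⟨i, hi⟩ := hne
    by_cases hone : ∀ l, l ≠ i → v l = w l
    · exact swap_adj_mem hq v w i hi hone
    · push_neg at hone
      set w' := Function.update w i (v i) with hw'
      have hw'i : w' i = v i := Function.update_self i (v i) w
      have hw'l : ∀ l, l ≠ i → w' l = w l := fun l hl => Function.update_of_ne hl (v i) w
      have hvw' : v ≠ w' := by
        obtain ⟨l, hl, hvl⟩ := hone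
        intro h
        apply hvl
        rw [congrFun h l, hw'l l hl]
      have hw'w : w' ≠ w := by
        intro h
        apply hi
        rw [← hw'i, h]
      have hsub : (Finset.univ.filter (fun l => v l ≠ w' l)) ⊆
          (Finset.univ.filter (fun l => v l ≠ w l)).erase i := by
        intro l hl
        simp only [Finset.mem_filter, Finset.mem_univ, true_and] at hl
        rw [Finset.mem_erase]
        refine ⟨?_, ?_⟩
        · intro h
          apply hl
          rw [h, hw'i]
        · simp only [Finset.mem_filter, Finset.mem_univ, true_and]
          intro h
          apply hl
          have hli : l ≠ i := fun h2 => hl (by rw [h2, hw'i])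
          rw [h, hw'l l hli]
      have hcard' : (Finset.univ.filter (fun l => v l ≠ w' l)).card ≤ d := by
        have h1 := Finset.card_le_card hsub
        have h2 : ((Finset.univ.filter (fun l => v l ≠ w l)).erase i).card ≤ d := by
          have hmem : i ∈ Finset.univ.filter (fun l => v l ≠ w l) := by simp [hi]
          have := Finset.card_erase_of_mem hmem
          omega
        omega
      have h1 : Equiv.swap v w' ∈ (piHom (k := k) (n := n)).range := IH v w' hvw' hcard'
      have h2 : Equiv.swap w' w ∈ (piHom (k := k) (n := n)).range := by
        apply swap_adj_mem hq w' w i (by rw [hw'i]; exact hi) hw'l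
      have hkey := Equiv.swap_apply_apply (Equiv.swap w' w) v w'
      rw [Equiv.swap_apply_of_ne_of_ne hvw' hvw, Equiv.swap_apply_left] at hkey
      rw [hkey]
      exact mul_mem (mul_mem h2 h1) (inv_mem h2)

theorem range_top (hq : Fintype.card k = 2) :
    (piHom (k := k) (n := n)).range = ⊤ := by
  rw [eq_top_iff, ← Equiv.Perm.closure_isSwap, Subgroup.closure_le]
  rintro σ ⟨x, y, hxy, rfl⟩
  exact swaps_mem hq _ x y hxy le_rfl

end Moves
end Poly

theorem maxrel_top {X : Type*} [Group X] {H : Subgroup X} (h : IsCoatom H) :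
    MaxRel ⊤ H :=
  ⟨lt_top_iff_ne_top.mpr h.1, fun K hK _ => h.2 K hK⟩

end StabAux

open StabAux in
/-- over a finite field of characteristic 2, the setwise stabilizer of a
nonempty proper subset `Δ ⊂ kⁿ` (`n ≥ 2`) is a maximal proper subgroup of the
automorphism group of affine `n`-space if and only if `2·|Δ| ≠ |k|ⁿ`. -/
theorem stabilizer_finite_set_maximal_char_two {k : Type*} [Field k] [Finite k]
    [CharP k 2] (n : ℕ) (hn : 2 ≤ n)
    (Δ : Set (Fin n → k)) (hne : Δ.Nonempty) (hproper : Δ ≠ Set.univ) :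
    (∃ H : Subgroup (MvPolynomial (Fin n) k ≃ₐ[k] MvPolynomial (Fin n) k),
      (H : Set (MvPolynomial (Fin n) k ≃ₐ[k] MvPolynomial (Fin n) k))
          = {φ | (fun p : Fin n → k => fun j => aeval p (φ (X j))) '' Δ = Δ} ∧
        IsCoatom H) ↔
      2 * Nat.card Δ ≠ Nat.card (Fin n → k) := by
  cases nonempty_fintype k
  letI : DecidableEq k := Classical.decEq k
  -- identification of the stabilizer set with a comap
  have hpiinv : ∀ φ : MvPolynomial (Fin n) k ≃ₐ[k] MvPolynomial (Fin n) k,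
      ((piHom (k := k) (n := n)) φ)⁻¹ = piPerm φ := by
    intro φ
    refine Equiv.ext fun p => ?_
    show T (φ⁻¹)⁻¹ p = T φ p
    rw [inv_inv]
  have hset : {φ : MvPolynomial (Fin n) k ≃ₐ[k] MvPolynomial (Fin n) k |
        (fun p : Fin n → k => fun j => aeval p (φ (X j))) '' Δ = Δ}
      = ↑(Subgroup.comap (piHom (k := k) (n := n)) (SP Δ)) := by
    ext φ
    have h1 : (fun p : Fin n → k => fun j => aeval p (φ (X j))) = ⇑(piPerm φ) := rfl
    show (fun p : Fin n → k => fun j => aeval p (φ (X j))) '' Δ = Δ ↔ _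
    rw [h1, ← hpiinv φ]
    have h2 : ⇑((piHom (k := k) (n := n)) φ)⁻¹ '' Δ = Δ ↔
        ((piHom (k := k) (n := n)) φ)⁻¹ ∈ SP Δ := Iff.rfl
    rw [h2, Subgroup.inv_mem_iff]
    exact Iff.rfl
  -- cardinal bookkeeping
  have hNcard : Nat.card (Fin n → k) = Fintype.card (Fin n → k) := Nat.card_eq_fintype_card
  have haΔ : Nat.card Δ = Δ.ncard := Nat.card_coe_set_eq Δ
  have hsum : Δ.ncard + Δᶜ.ncard = Fintype.card (Fin n → k) := by
    rw [Set.ncard_add_ncard_compl, Nat.card_eq_fintype_card]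
  have hq2 : 2 ≤ Fintype.card k := Fintype.one_lt_card
  have hVcard : Fintype.card (Fin n → k) = Fintype.card k ^ n := by
    rw [Fintype.card_fun, Fintype.card_fin]
  have hNbig : 4 ≤ Fintype.card (Fin n → k) := by
    rw [hVcard]
    calc (4 : ℕ) = 2 ^ 2 := by norm_num
      _ ≤ 2 ^ n := Nat.pow_le_pow_right (by norm_num) hn
      _ ≤ Fintype.card k ^ n := Nat.pow_le_pow_left hq2 n
  have hcne : Δᶜ.Nonempty := Set.nonempty_compl.mpr hproper
  have halt : alternatingGroup (Fin n → k) ≤ (piHom (k := k) (n := n)).range :=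
    alt_le_range hn
  -- the q-dichotomy
  obtain ⟨m, hprime, hcardk⟩ := FiniteField.card k 2
  have hqcases : Fintype.card k = 2 ∨ 4 ≤ Fintype.card k := by
    rcases eq_or_ne (m : ℕ) 1 with hm | hm
    · left; rw [hcardk, hm, pow_one]
    · right
      have hm2 : 2 ≤ (m : ℕ) := by
        have := m.pos
        omega
      rw [hcardk]
      calc (4 : ℕ) = 2 ^ 2 := by norm_num
        _ ≤ 2 ^ (m : ℕ) := Nat.pow_le_pow_right (by norm_num) hm2
  constructor
  · rintro ⟨H, hHset, hHco⟩
    have hHeq : H = Subgroup.comap (piHom (k := k) (n := n)) (SP Δ) :=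
      SetLike.ext' (hHset.trans hset)
    rw [hHeq] at hHco
    have hmax := (bridge (piHom (k := k) (n := n)) (SP Δ)).mp hHco
    intro h2a
    have heq : Δ.ncard = Δᶜ.ncard := by
      rw [haΔ, hNcard] at h2a
      omega
    exact L3 halt hNbig hne heq hmax
  · intro h2a
    refine ⟨Subgroup.comap (piHom (k := k) (n := n)) (SP Δ), hset.symm, ?_⟩
    rw [bridge (piHom (k := k) (n := n)) (SP Δ)]
    have hab : Δ.ncard ≠ Δᶜ.ncard := by
      rw [haΔ, hNcard] at h2a
      omega
    have main : ∀ A : Set (Fin n → k), A.Nonempty → A.ncard < Aᶜ.ncard →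
        MaxRel (piHom (k := k) (n := n)).range
          (SP A ⊓ (piHom (k := k) (n := n)).range) := by
      intro A hA hlt
      rcases hqcases with hq | hq
      · have htop := range_top (k := k) (n := n) hq
        rw [htop, inf_top_eq]
        exact maxrel_top (L1 hA hlt)
      · apply L2 halt ?_ hA hlt
        rw [hVcard]
        calc (12 : ℕ) ≤ 4 ^ 2 := by norm_num
          _ ≤ Fintype.card k ^ 2 := Nat.pow_le_pow_left hq 2
          _ ≤ Fintype.card k ^ n := Nat.pow_le_pow_right (by omega) hn
    rcases Nat.lt_or_ge Δ.ncard Δᶜ.ncard with hlt | hge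
    · exact main Δ hne hlt
    · have hlt : Δᶜ.ncard < Δᶜᶜ.ncard := by
        rw [compl_compl]
        omega
      have := main Δᶜ hcne hlt
      rwa [SP_compl] at this
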